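/- (Well-definedness of gen up to renaming.) For every ground type τ and every term t with t : τ, any two terms obtained as gen_τ(t) using two different choices of distinct fresh variables are variants of each other, i.e., each is an instance of the other. -/

import Mathlib

/-- First-order terms over countably infinite sets of variables (ℕ)
and function symbols (ℕ). -/
inductive Term : Type where
  | var : ℕ → Term
  | app : ℕ → List Term → Term

namespace Term

/-- Applying a substitution (a mapping from variables to terms) homomorphically. -/
def subst (θ : ℕ → Term) : Term → Term
  | var v => θ v
  | app f ts => app f (ts.attach.map (fun x => x.1.subst θ))
decreasing_by
  have := List.sizeOf_lt_of_mem x.2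
  simp only [Term.app.sizeOf_spec]
  omega

/-- A term is ground if it contains no variables. -/
inductive Ground : Term → Prop where
  | app : ∀ f ts, (∀ t ∈ ts, Ground t) → Ground (app f ts)

/-- The variable `v` occurs in the term. -/
inductive Occurs (v : ℕ) : Term → Prop where
  | var : Occurs v (var v)
  | app : ∀ f ts t, t ∈ ts → Occurs v t → Occurs v (app f ts)

/-- `s` is an instance of `t` if `s = tθ` for some substitution `θ`. -/
def IsInstanceOf (s t : Term) : Prop := ∃ θ : ℕ → Term, t.subst θ = s

/-- Two terms are variants if each is an instance of the other. -/
def Variant (s t : Term) : Prop := s.IsInstanceOf t ∧ t.IsInstanceOf s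

end Term

/-- Types: type variables, the distinguished 0-ary constructors
`static`, `dynamic`, `nonvar`, and other constructors applied to types. -/
inductive Ty : Type where
  | var : ℕ → Ty
  | static : Ty
  | dynamic : Ty
  | nonvar : Ty
  | con : ℕ → List Ty → Ty

namespace Ty

/-- Applying a type substitution. -/
def subst (σ : ℕ → Ty) : Ty → Ty
  | var v => σ v
  | static => static
  | dynamic => dynamic
  | nonvar => nonvar
  | con c args => con c (args.attach.map (fun x => x.1.subst σ))
decreasing_by
  have := List.sizeOf_lt_of_mem x.2
  simp only [Ty.con.sizeOf_spec]
  omega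

/-- A type is ground if it contains no type variables. -/
inductive Ground : Ty → Prop where
  | static : Ground static
  | dynamic : Ground dynamic
  | nonvar : Ground nonvar
  | con : ∀ c args, (∀ τ ∈ args, Ground τ) → Ground (con c args)

/-- All type variables of the type are below `n`. -/
inductive VarsBelow (n : ℕ) : Ty → Prop where
  | var : ∀ v, v < n → VarsBelow n (var v)
  | static : VarsBelow n static
  | dynamic : VarsBelow n dynamic
  | nonvar : VarsBelow n nonvar
  | con : ∀ c args, (∀ τ ∈ args, VarsBelow n τ) → VarsBelow n (con c args)

end Ty

/-- A type definition `c(V₁,…,Vₙ) → f₁(T₁¹,…) ; … ; f_k(T_k¹,…)` for an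
`n`-ary type constructor: the variables are represented by `0,…,arity-1`,
the alternatives are pairs of a function symbol and the list of argument types;
the function symbols are distinct and the argument types only use
variables among `0,…,arity-1`. -/
structure TypeDef where
  arity : ℕ
  alts : List (ℕ × List Ty)
  alts_nonempty : alts ≠ []
  alts_nodup : (alts.map Prod.fst).Nodup
  vars_bound : ∀ p ∈ alts, ∀ τ ∈ p.2, Ty.VarsBelow arity τ

/-- A type system: exactly one type definition for every type constructor
other than `static`, `dynamic` and `nonvar`. -/
structure TypeSystem where
  defs : ℕ → TypeDef

mutual
/-- The type judgement `t : τ` relative to the type system `Γ`. -/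
inductive HasType (Γ : TypeSystem) : Term → Ty → Prop where
  | dyn (t : Term) : HasType Γ t .dynamic
  | stat (t : Term) : t.Ground → HasType Γ t .static
  | nv (f : ℕ) (ts : List Term) : HasType Γ (.app f ts) .nonvar
  | con (c : ℕ) (σ : ℕ → Ty) (f : ℕ) (Ts : List Ty) (ts : List Term)
      (hσ : ∀ v, (σ v).Ground)
      (hmem : (f, Ts) ∈ (Γ.defs c).alts)
      (hargs : HasTypeArgs Γ ts (Ts.map (Ty.subst σ))) :
      HasType Γ (.app f ts) (.con c ((List.range (Γ.defs c).arity).map σ))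

/-- `HasTypeArgs Γ ts τs` : the terms `ts` pointwise have the types `τs`. -/
inductive HasTypeArgs (Γ : TypeSystem) : List Term → List Ty → Prop where
  | nil : HasTypeArgs Γ [] []
  | cons {t τ ts τs} : HasType Γ t τ → HasTypeArgs Γ ts τs →
      HasTypeArgs Γ (t :: ts) (τ :: τs)
end

/-- Atoms `p(t₁,…,tₙ)` over a countably infinite set of predicate symbols (ℕ). -/
structure Atom where
  pred : ℕ
  args : List Term

namespace Atom

/-- Substitutions apply to atoms argumentwise. -/
def subst (θ : ℕ → Term) (A : Atom) : Atom := ⟨A.pred, A.args.map (Term.subst θ)⟩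

/-- `B` is an instance of `A`. -/
def IsInstanceOf (B A : Atom) : Prop := ∃ θ : ℕ → Term, A.subst θ = B

/-- Two atoms are variants if each is an instance of the other. -/
def Variant (A B : Atom) : Prop := A.IsInstanceOf B ∧ B.IsInstanceOf A

end Atom

/-- A division: a set of expressions `p(τ₁,…,τₙ)` (represented as pairs of a
predicate symbol and a list of types), with all types ground and at most one
division per predicate. -/
def IsDivision (Δ : Set (ℕ × List Ty)) : Prop :=
  (∀ d ∈ Δ, ∀ τ ∈ d.2, τ.Ground) ∧
  (∀ d ∈ Δ, ∀ d' ∈ Δ, d.1 = d'.1 → d = d')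

/-- An atom `p(t₁,…,tₙ)` is safe wrt `Δ` iff there is `p(τ₁,…,τₙ) ∈ Δ`
with `tᵢ : τᵢ` for all `i`. -/
def SafeAtom (Γ : TypeSystem) (Δ : Set (ℕ × List Ty)) (A : Atom) : Prop :=
  ∃ τs : List Ty, (A.pred, τs) ∈ Δ ∧ HasTypeArgs Γ A.args τs

mutual
/-- `Gen Γ τ t s L`: `s` is a result of the partial generalisation mapping
`gen_τ(t)`, where `L` records (in order) the fresh variables chosen. -/
inductive Gen (Γ : TypeSystem) : Ty → Term → Term → List ℕ → Prop where
  | static (t : Term) : Gen Γ .static t t []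
  | dynamic (t : Term) (v : ℕ) : Gen Γ .dynamic t (.var v) [v]
  | nonvar (f : ℕ) (ts : List Term) (vs : List ℕ) (h : vs.length = ts.length) :
      Gen Γ .nonvar (.app f ts) (.app f (vs.map Term.var)) vs
  | con (c : ℕ) (σ : ℕ → Ty) (f : ℕ) (Ts : List Ty) (ts ss : List Term) (L : List ℕ)
      (hσ : ∀ v, (σ v).Ground)
      (hmem : (f, Ts) ∈ (Γ.defs c).alts)
      (hargs : GenArgs Γ (Ts.map (Ty.subst σ)) ts ss L) :
      Gen Γ (.con c ((List.range (Γ.defs c).arity).map σ)) (.app f ts) (.app f ss) L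

/-- Pointwise generalisation of a list of terms, collecting the fresh variables. -/
inductive GenArgs (Γ : TypeSystem) : List Ty → List Term → List Term → List ℕ → Prop where
  | nil : GenArgs Γ [] [] [] []
  | cons {τ t s L τs ts ss Ls} : Gen Γ τ t s L → GenArgs Γ τs ts ss Ls →
      GenArgs Γ (τ :: τs) (t :: ts) (s :: ss) (L ++ Ls)
end

/-- `GenAtom Γ Δ A B L`: `B` is a result of `gen_Δ(A)` with fresh variables `L`. -/
def GenAtom (Γ : TypeSystem) (Δ : Set (ℕ × List Ty)) (A B : Atom) (L : List ℕ) : Prop :=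
  B.pred = A.pred ∧
  ∃ τs : List Ty, (A.pred, τs) ∈ Δ ∧ HasTypeArgs Γ A.args τs ∧
    GenArgs Γ τs A.args B.args L


namespace Term

theorem subst_app (θ : ℕ → Term) (f : ℕ) (ts : List Term) :
    subst θ (app f ts) = app f (ts.map (subst θ)) := by
  rw [subst]
  congr 1
  rw [List.map_attach_eq_pmap]
  simp [List.pmap_eq_map]

theorem subst_congr (θ₁ θ₂ : ℕ → Term) :
    ∀ t : Term, (∀ v, Occurs v t → θ₁ v = θ₂ v) → t.subst θ₁ = t.subst θ₂
  | var v, h => by rw [subst, subst]; exact h v .var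
  | app f ts, h => by
    rw [subst_app, subst_app]
    congr 1
    refine List.map_congr_left (fun t ht => ?_)
    exact subst_congr θ₁ θ₂ t (fun v hv => h v (.app f ts t ht hv))
decreasing_by
  have := List.sizeOf_lt_of_mem ht
  simp only [Term.app.sizeOf_spec]
  omega

theorem subst_var : ∀ t : Term, t.subst Term.var = t
  | var v => by rw [subst]
  | app f ts => by
    rw [subst_app]
    congr 1
    refine List.map_congr_left (fun t ht => ?_) |>.trans (List.map_id _)
    exact subst_var t
decreasing_by
  have := List.sizeOf_lt_of_mem ht
  simp only [Term.app.sizeOf_spec]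
  omega

theorem subst_id_of (θ : ℕ → Term) (t : Term) (h : ∀ v, Occurs v t → θ v = Term.var v) :
    t.subst θ = t := (subst_congr θ Term.var t h).trans (subst_var t)

end Term

namespace Ty

theorem subst_con (σ : ℕ → Ty) (c : ℕ) (args : List Ty) :
    subst σ (con c args) = con c (args.map (subst σ)) := by
  rw [subst]
  congr 1
  rw [List.map_attach_eq_pmap]
  simp [List.pmap_eq_map]

theorem varsBelow_con_inv {n c : ℕ} {args : List Ty} (h : VarsBelow n (con c args)) :
    ∀ τ ∈ args, VarsBelow n τ := by
  cases h with | con _ _ hall => exact hall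

theorem subst_congr_below (σ₁ σ₂ : ℕ → Ty) (n : ℕ) (hσ : ∀ v < n, σ₁ v = σ₂ v) :
    ∀ τ : Ty, VarsBelow n τ → τ.subst σ₁ = τ.subst σ₂
  | var v, h => by rw [subst, subst]; cases h with | var _ hv => exact hσ v hv
  | static, _ => by rw [subst, subst]
  | dynamic, _ => by rw [subst, subst]
  | nonvar, _ => by rw [subst, subst]
  | con c args, h => by
    rw [subst_con, subst_con]
    congr 1
    refine List.map_congr_left (fun τ hτ => ?_)
    exact subst_congr_below σ₁ σ₂ n hσ τ (varsBelow_con_inv h τ hτ)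
decreasing_by
  have := List.sizeOf_lt_of_mem hτ
  simp only [Ty.con.sizeOf_spec]
  omega

end Ty

theorem sigma_agree {σ₁ σ₂ : ℕ → Ty} {n : ℕ}
    (h : (List.range n).map σ₁ = (List.range n).map σ₂) : ∀ v < n, σ₁ v = σ₂ v := by
  intro v hv
  have := List.getElem_of_eq h (i := v) (by simpa using hv)
  simpa using this

theorem alt_unique {l : List (ℕ × List Ty)} (h : (l.map Prod.fst).Nodup) {f : ℕ}
    {a b : List Ty} (h1 : (f, a) ∈ l) (h2 : (f, b) ∈ l) : a = b :=
  congrArg Prod.snd (List.inj_on_of_nodup_map h h1 h2 rfl)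

/-- Inversion for `Gen` at a constructor type. -/
theorem gen_con_inv {Γ : TypeSystem} {c : ℕ} {σ : ℕ → Ty} {f : ℕ} {ts : List Term}
    {s₂ : Term} {L₂ : List ℕ}
    (h : Gen Γ (.con c ((List.range (Γ.defs c).arity).map σ)) (.app f ts) s₂ L₂) :
    ∃ (σ' : ℕ → Ty) (Ts : List Ty) (ss : List Term), s₂ = Term.app f ss ∧
      (f, Ts) ∈ (Γ.defs c).alts ∧
      (List.range (Γ.defs c).arity).map σ' = (List.range (Γ.defs c).arity).map σ ∧
      GenArgs Γ (Ts.map (Ty.subst σ')) ts ss L₂ := by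
  generalize heq : (Ty.con c ((List.range (Γ.defs c).arity).map σ)) = τ' at h
  cases h with
  | static => exact absurd heq (by simp)
  | dynamic => exact absurd heq (by simp)
  | nonvar => exact absurd heq (by simp)
  | con c' σ' f' Ts' ts' ss' L' hσ' hmem' hargs' =>
    injection heq with hc hm
    subst hc
    exact ⟨σ', Ts', ss', rfl, hmem', hm.symm, hargs'⟩

theorem gen_len {Γ : TypeSystem} {τ : Ty} {t s₁ : Term} {L₁ : List ℕ} (h₁ : Gen Γ τ t s₁ L₁) :
    ∀ (s₂ : Term) (L₂ : List ℕ), Gen Γ τ t s₂ L₂ → L₁.length = L₂.length := by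
  refine Gen.rec (Γ := Γ)
    (motive_1 := fun τ t s₁ L₁ _ => ∀ (s₂ : Term) (L₂ : List ℕ),
      Gen Γ τ t s₂ L₂ → L₁.length = L₂.length)
    (motive_2 := fun τs ts ss₁ Ls₁ _ => ∀ (ss₂ : List Term) (Ls₂ : List ℕ),
      GenArgs Γ τs ts ss₂ Ls₂ → Ls₁.length = Ls₂.length)
    ?_ ?_ ?_ ?_ ?_ ?_ h₁
  · intro t s₂ L₂ h₂; cases h₂; rfl
  · intro t v s₂ L₂ h₂; cases h₂; rfl
  · intro f ts vs h s₂ L₂ h₂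
    cases h₂ with
    | nonvar _ _ vs' h' => rw [h, h']
  · intro c σ f Ts ts ss L hσ hmem hargs ih s₂ L₂ h₂
    obtain ⟨σ', Ts', ss', rfl, hmem', hmaps, hargs'⟩ := gen_con_inv h₂
    have hTs : Ts' = Ts := alt_unique (Γ.defs c).alts_nodup hmem' hmem
    rw [hTs] at hargs'
    have hmap : Ts.map (Ty.subst σ') = Ts.map (Ty.subst σ) :=
      List.map_congr_left (fun τ hτ => Ty.subst_congr_below σ' σ _ (sigma_agree hmaps) τ
        ((Γ.defs c).vars_bound _ hmem τ hτ))
    rw [hmap] at hargs'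
    exact ih ss' L₂ hargs'
  · intro ss₂ Ls₂ h₂; cases h₂; rfl
  · intro τ' t' s' L' τs' ts' ss' Ls' hh ht ih1 ih2 ss₂ Ls₂ h₂
    cases h₂ with
    | cons hh' ht' =>
      rename_i s'' L'' ss'' Ls''
      simp only [List.length_append, ih1 _ _ hh', ih2 _ _ ht']

theorem gen_subst {Γ : TypeSystem} {τ : Ty} {t s₁ : Term} {L₁ : List ℕ}
    (h₁ : Gen Γ τ t s₁ L₁) :
    ∀ (s₂ : Term) (L₂ : List ℕ), Gen Γ τ t s₂ L₂ → ∀ θ : ℕ → Term,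
      (∀ (i : ℕ) (hi : i < L₁.length) (hi' : i < L₂.length), θ L₁[i] = Term.var L₂[i]) →
      (∀ v, Term.Occurs v t → θ v = Term.var v) →
      s₁.subst θ = s₂ := by
  refine Gen.rec (Γ := Γ)
    (motive_1 := fun τ t s₁ L₁ _ => ∀ (s₂ : Term) (L₂ : List ℕ),
      Gen Γ τ t s₂ L₂ → ∀ θ : ℕ → Term,
      (∀ (i : ℕ) (hi : i < L₁.length) (hi' : i < L₂.length), θ L₁[i] = Term.var L₂[i]) →
      (∀ v, Term.Occurs v t → θ v = Term.var v) →
      s₁.subst θ = s₂)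
    (motive_2 := fun τs ts ss₁ Ls₁ _ => ∀ (ss₂ : List Term) (Ls₂ : List ℕ),
      GenArgs Γ τs ts ss₂ Ls₂ → ∀ θ : ℕ → Term,
      (∀ (i : ℕ) (hi : i < Ls₁.length) (hi' : i < Ls₂.length), θ Ls₁[i] = Term.var Ls₂[i]) →
      (∀ v t', t' ∈ ts → Term.Occurs v t' → θ v = Term.var v) →
      ss₁.map (Term.subst θ) = ss₂)
    ?_ ?_ ?_ ?_ ?_ ?_ h₁
  · intro t s₂ L₂ h₂ θ hidx hocc
    cases h₂
    exact Term.subst_id_of θ t hocc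
  · intro t v s₂ L₂ h₂ θ hidx hocc
    cases h₂ with
    | dynamic _ v' =>
      rw [Term.subst]
      exact hidx 0 (by simp) (by simp)
  · intro f ts vs h s₂ L₂ h₂ θ hidx hocc
    cases h₂ with
    | nonvar _ _ vs' h' =>
      rw [Term.subst_app]
      congr 1
      refine List.ext_getElem (by simp [h, h']) (fun i h1 h2 => ?_)
      simp only [List.getElem_map]
      rw [Term.subst]
      exact hidx i (by simpa using h1) (by simpa using h2)
  · intro c σ f Ts ts ss L hσ hmem hargs ih s₂ L₂ h₂ θ hidx hocc
    obtain ⟨σ', Ts', ss', rfl, hmem', hmaps, hargs'⟩ := gen_con_inv h₂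
    have hTs : Ts' = Ts := alt_unique (Γ.defs c).alts_nodup hmem' hmem
    rw [hTs] at hargs'
    have hmap : Ts.map (Ty.subst σ') = Ts.map (Ty.subst σ) :=
      List.map_congr_left (fun τ hτ => Ty.subst_congr_below σ' σ _ (sigma_agree hmaps) τ
        ((Γ.defs c).vars_bound _ hmem τ hτ))
    rw [hmap] at hargs'
    rw [Term.subst_app]
    congr 1
    exact ih ss' L₂ hargs' θ hidx
      (fun v t' ht' hv => hocc v (.app f ts t' ht' hv))
  · intro ss₂ Ls₂ h₂ θ hidx hocc
    cases h₂
    rfl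
  · intro τ' t' s' L' τs' ts' ss' Ls' hh ht ih1 ih2 ss₂ Ls₂ h₂ θ hidx hocc
    cases h₂ with
    | cons hh' ht' =>
      rename_i s'' L'' ss'' Ls''
      have hlen : L'.length = L''.length := gen_len hh _ _ hh'
      simp only [List.map_cons, List.cons.injEq]
      constructor
      · refine ih1 s'' L'' hh' θ (fun i hi hi' => ?_)
          (fun v hv => hocc v t' List.mem_cons_self hv)
        have := hidx i (by simp; omega) (by simp; omega)
        rwa [List.getElem_append_left hi, List.getElem_append_left hi'] at this
      · refine ih2 ss'' Ls'' ht' θ (fun i hi hi' => ?_)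
          (fun v t'' ht'' hv => hocc v t'' (List.mem_cons_of_mem _ ht'') hv)
        have := hidx (L'.length + i) (by simp; omega) (by simp; omega)
        rw [List.getElem_append_right (by omega), List.getElem_append_right (by omega)] at this
        simpa [hlen] using this

theorem gen_instance {Γ : TypeSystem} {τ : Ty} {t s₁ s₂ : Term} {L₁ L₂ : List ℕ}
    (h₁ : Gen Γ τ t s₁ L₁) (hnd₁ : L₁.Nodup) (hf₁ : ∀ v ∈ L₁, ¬ Term.Occurs v t)
    (h₂ : Gen Γ τ t s₂ L₂) : s₂.IsInstanceOf s₁ := by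
  classical
  refine ⟨fun v => if v ∈ L₁ then Term.var (L₂.getD (L₁.idxOf v) 0) else Term.var v, ?_⟩
  refine gen_subst h₁ s₂ L₂ h₂ _ (fun i hi hi' => ?_) (fun v hv => ?_)
  · rw [if_pos (List.getElem_mem _), hnd₁.idxOf_getElem i hi,
      List.getD_eq_getElem _ _ hi']
  · rw [if_neg (fun hmem => hf₁ v hmem hv)]

/-- **Well-definedness of gen up to renaming.** For every ground type `τ` and
every term `t` with `t : τ`, any two terms obtained as `gen_τ(t)` using two
different choices of distinct fresh variables are variants of each other. -/
theorem gen_variant (Γ : TypeSystem) (τ : Ty) (t : Term) (hτ : τ.Ground)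
    (ht : HasType Γ t τ) (s₁ s₂ : Term) (L₁ L₂ : List ℕ)
    (h₁ : Gen Γ τ t s₁ L₁) (hnd₁ : L₁.Nodup) (hf₁ : ∀ v ∈ L₁, ¬ Term.Occurs v t)
    (h₂ : Gen Γ τ t s₂ L₂) (hnd₂ : L₂.Nodup) (hf₂ : ∀ v ∈ L₂, ¬ Term.Occurs v t) :
    Term.Variant s₁ s₂ :=
  ⟨gen_instance h₂ hnd₂ hf₂ h₁, gen_instance h₁ hnd₁ hf₁ h₂⟩
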